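/- Let n ≥ 3, let 1 < p < ∞ with 1/p + 1/q = 1, and let γ > −(n−1)(p−1). Let f be a Lebesgue measurable function on R^{n−1} with ∫_{R^{n−1}} |f(y')|^p/(1+|y'|)^γ dy' < ∞. For x ∈ H define v_1(x) = ∫_{{y' ∈ R^{n−1} : 1 < |y'| ≤ |x|/2}} P(x, y') f(y') dy'. Then v_1(x) = o( x_n |x|^{γ/p + (n−1)/q − n} ) as |x| → ∞, x ∈ H. -/

import Mathlib

open MeasureTheory Filter Metric Asymptotics ENNReal

/-- The last coordinate `x_n` of a point `x ∈ ℝⁿ`. -/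
noncomputable def lastCoord {n : ℕ} (x : EuclideanSpace ℝ (Fin n)) : ℝ :=
  if h : 0 < n then x ⟨n - 1, Nat.sub_lt h one_pos⟩ else 0

/-- The upper half-space `H = {x ∈ ℝⁿ : x_n > 0}`. -/
def upperHalfSpace (n : ℕ) : Set (EuclideanSpace ℝ (Fin n)) :=
  {x | 0 < lastCoord x}

/-- `ω_n = 2 π^{n/2} / Γ(n/2)`, the surface area of the unit sphere in ℝⁿ. -/
noncomputable def surfaceArea (n : ℕ) : ℝ :=
  2 * Real.pi ^ ((n : ℝ) / 2) / Real.Gamma ((n : ℝ) / 2)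

/-- The embedding `y' ↦ (y', 0)` of `ℝ^{n-1}` into `ℝⁿ`. -/
noncomputable def extendBdry {n : ℕ} (y' : EuclideanSpace ℝ (Fin (n - 1))) :
    EuclideanSpace ℝ (Fin n) :=
  (EuclideanSpace.equiv (Fin n) ℝ).symm
    (fun i => if h : (i : ℕ) < n - 1 then y' ⟨(i : ℕ), h⟩ else 0)

/-- The Poisson kernel `P(x, y') = 2 x_n / (ω_n |x - (y',0)|^n)` of the half-space. -/
noncomputable def halfSpacePoissonKernel (n : ℕ) (x : EuclideanSpace ℝ (Fin n))
    (y' : EuclideanSpace ℝ (Fin (n - 1))) : ℝ :=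
  2 * lastCoord x / (surfaceArea n * ‖x - extendBdry y'‖ ^ n)

/-- The Poisson integral `v(x) = ∫_{ℝ^{n-1}} P(x,y') f(y') dy'`. -/
noncomputable def poissonIntegral (n : ℕ) (f : EuclideanSpace ℝ (Fin (n - 1)) → ℝ)
    (x : EuclideanSpace ℝ (Fin n)) : ℝ :=
  ∫ y', halfSpacePoissonKernel n x y' * f y'

/-- The reflection `y* = (y', -y_n)` of `y` in the boundary hyperplane. -/
noncomputable def reflectPt {n : ℕ} (y : EuclideanSpace ℝ (Fin n)) :
    EuclideanSpace ℝ (Fin n) :=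
  (EuclideanSpace.equiv (Fin n) ℝ).symm
    (fun i => if (i : ℕ) = n - 1 then -(y i) else y i)

/-- The Green function `G(x,y) = r_n (|x - y*|^{2-n} - |x - y|^{2-n})` of the
half-space, where `r_n = 1/((n-2) ω_n)`. -/
noncomputable def greenFn (n : ℕ) (x y : EuclideanSpace ℝ (Fin n)) : ℝ :=
  (1 / (((n : ℝ) - 2) * surfaceArea n)) *
    (‖x - reflectPt y‖ ^ ((2 : ℝ) - n) - ‖x - y‖ ^ ((2 : ℝ) - n))

/-- The Green potential `h(x) = ∫_H G(x,y) dμ(y)`. -/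
noncomputable def greenPotential (n : ℕ) (μ : Measure (EuclideanSpace ℝ (Fin n)))
    (x : EuclideanSpace ℝ (Fin n)) : ℝ :=
  ∫ y in upperHalfSpace n, greenFn n x y ∂μ

/-- The maximal function of order `β` of a Borel measure `μ`:
`M(dμ)(x) = sup_{0<r<∞} μ(B(x,r))/r^β`. -/
noncomputable def maxFn {n : ℕ} (μ : Measure (EuclideanSpace ℝ (Fin n))) (β : ℝ)
    (x : EuclideanSpace ℝ (Fin n)) : ℝ≥0∞ :=
  ⨆ (r : ℝ) (_ : 0 < r), μ (Metric.ball x r) / ENNReal.ofReal (r ^ β)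

lemma aux_one_add_rpow (α t : ℝ) (ht : 1 < t) :
    (1 + t) ^ α ≤ ((2:ℝ) ^ α + 1) * t ^ α := by
  have ht0 : 0 < t := by linarith
  rcases le_or_gt 0 α with hα | hα
  · have h1 : (1 + t) ^ α ≤ (2 * t) ^ α :=
      Real.rpow_le_rpow (by linarith) (by linarith) hα
    have h2 : (2 * t) ^ α = 2 ^ α * t ^ α := Real.mul_rpow (by norm_num) ht0.le
    have h3 : (0:ℝ) ≤ t ^ α := Real.rpow_nonneg ht0.le α
    nlinarith
  · have h1 : (1 + t) ^ α ≤ t ^ α :=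
      Real.rpow_le_rpow_of_nonpos ht0 (by linarith) hα.le
    have h2 : (0:ℝ) ≤ t ^ α := Real.rpow_nonneg ht0.le α
    have h3 : (0:ℝ) < (2:ℝ) ^ α := Real.rpow_pos_of_pos (by norm_num) α
    nlinarith

lemma aux_ball_rpow_lt_top (m : ℕ) (hm : 0 < m) (α : ℝ) (hα : -(m:ℝ) < α) :
    ∫⁻ z in ball (0 : EuclideanSpace ℝ (Fin m)) 1, ENNReal.ofReal (‖z‖ ^ α) < ⊤ := by
  haveI : Nonempty (Fin m) := ⟨⟨0, hm⟩⟩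
  haveI : Nontrivial (EuclideanSpace ℝ (Fin m)) := inferInstance
  have hfr : Module.finrank ℝ (EuclideanSpace ℝ (Fin m)) = m := finrank_euclideanSpace_fin
  rcases le_or_gt 0 α with hα0 | hα0
  · calc ∫⁻ z in ball (0 : EuclideanSpace ℝ (Fin m)) 1, ENNReal.ofReal (‖z‖ ^ α)
        ≤ ∫⁻ _ in ball (0 : EuclideanSpace ℝ (Fin m)) 1, 1 := by
          refine setLIntegral_mono' measurableSet_ball fun z hz => ?_
          simpa using ENNReal.ofReal_le_one.2
            (Real.rpow_le_one (norm_nonneg z) (le_of_lt (mem_ball_zero_iff.1 hz)) hα0)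
      _ = volume (ball (0 : EuclideanSpace ℝ (Fin m)) 1) := by simp
      _ < ⊤ := measure_ball_lt_top
  · set r : ℕ → ℝ := fun k => (2:ℝ)⁻¹ ^ k with hr
    have hrpos : ∀ k, 0 < r k := fun k => pow_pos (by norm_num) k
    set S : ℕ → Set (EuclideanSpace ℝ (Fin m)) :=
      fun k => {z | r (k+1) ≤ ‖z‖ ∧ ‖z‖ < r k} with hS
    have hsub : ball (0 : EuclideanSpace ℝ (Fin m)) 1 ⊆ {0} ∪ ⋃ k, S k := by
      intro z hz
      rcases eq_or_ne z 0 with rfl | hz0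
      · exact Or.inl rfl
      have hz1 : ‖z‖ < 1 := mem_ball_zero_iff.1 hz
      have hzpos : 0 < ‖z‖ := norm_pos_iff.2 hz0
      have hex : ∃ k, r (k+1) ≤ ‖z‖ := by
        obtain ⟨k, hk⟩ := exists_pow_lt_of_lt_one hzpos (by norm_num : (2:ℝ)⁻¹ < 1)
        exact ⟨k, le_trans (pow_le_pow_of_le_one (by norm_num) (by norm_num) (by omega)) hk.le⟩
      right
      refine Set.mem_iUnion.2 ⟨Nat.find hex, Nat.find_spec hex, ?_⟩
      rcases Nat.eq_zero_or_pos (Nat.find hex) with h0 | h0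
      · rw [h0]; simpa [r] using hz1
      · have := Nat.find_min hex (Nat.sub_lt h0 one_pos)
        push_neg at this
        have : ‖z‖ < r (Nat.find hex - 1 + 1) := this
        rwa [Nat.sub_add_cancel h0] at this
    set B := volume (ball (0 : EuclideanSpace ℝ (Fin m)) 1) with hB
    have hBlt : B < ⊤ := measure_ball_lt_top
    set ρ : ℝ := (2:ℝ)⁻¹ ^ (α + m) with hρ
    have hρpos : 0 < ρ := Real.rpow_pos_of_pos (by norm_num) _
    have hρlt : ρ < 1 := Real.rpow_lt_one (by norm_num) (by norm_num) (by linarith)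
    have hterm : ∀ k, ∫⁻ z in S k, ENNReal.ofReal (‖z‖ ^ α)
        ≤ ENNReal.ofReal ((2:ℝ)⁻¹ ^ α * ρ ^ k) * B := by
      intro k
      have hSk : S k ⊆ ball (0 : EuclideanSpace ℝ (Fin m)) (r k) := fun z hz =>
        mem_ball_zero_iff.2 hz.2
      calc ∫⁻ z in S k, ENNReal.ofReal (‖z‖ ^ α)
          ≤ ∫⁻ _ in ball (0 : EuclideanSpace ℝ (Fin m)) (r k),
              ENNReal.ofReal (r (k+1) ^ α) := by
            refine le_trans (setLIntegral_mono' ?_ fun z hz => ?_) (lintegral_mono_set hSk)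
            · exact (isClosed_le continuous_const continuous_norm).measurableSet.inter
                (isOpen_lt continuous_norm continuous_const).measurableSet
            · exact ENNReal.ofReal_le_ofReal
                (Real.rpow_le_rpow_of_nonpos (hrpos _) hz.1 hα0.le)
        _ = ENNReal.ofReal (r (k+1) ^ α) * (ENNReal.ofReal (r k ^ m) * B) := by
            rw [setLIntegral_const, Measure.addHaar_ball _ _ (hrpos k).le, hfr]
        _ ≤ ENNReal.ofReal ((2:ℝ)⁻¹ ^ α * ρ ^ k) * B := by
            rw [← mul_assoc, ← ENNReal.ofReal_mul (Real.rpow_nonneg (hrpos _).le _)]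
            refine mul_le_mul_left (ENNReal.ofReal_le_ofReal (le_of_eq ?_)) B
            rw [hρ, hr]
            show ((2:ℝ)⁻¹ ^ (k+1) : ℝ) ^ α * ((2:ℝ)⁻¹ ^ k : ℝ) ^ m
              = (2:ℝ)⁻¹ ^ α * ((2:ℝ)⁻¹ ^ (α + (m:ℝ))) ^ k
            have hx : (0:ℝ) < 2⁻¹ := by norm_num
            rw [← pow_mul, ← Real.rpow_natCast ((2:ℝ)⁻¹) (k*m),
              ← Real.rpow_natCast ((2:ℝ)⁻¹) (k+1), ← Real.rpow_mul hx.le,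
              ← Real.rpow_add hx,
              ← Real.rpow_natCast ((2:ℝ)⁻¹ ^ (α + (m:ℝ))) k, ← Real.rpow_mul hx.le,
              ← Real.rpow_add hx]
            congr 1
            push_cast
            ring
    calc ∫⁻ z in ball (0 : EuclideanSpace ℝ (Fin m)) 1, ENNReal.ofReal (‖z‖ ^ α)
        ≤ ∫⁻ z in {(0 : EuclideanSpace ℝ (Fin m))} ∪ ⋃ k, S k, ENNReal.ofReal (‖z‖ ^ α) :=
          lintegral_mono_set hsub
      _ ≤ (∫⁻ z in {(0 : EuclideanSpace ℝ (Fin m))}, ENNReal.ofReal (‖z‖ ^ α)) +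
            ∫⁻ z in ⋃ k, S k, ENNReal.ofReal (‖z‖ ^ α) := lintegral_union_le _ _ _
      _ ≤ 0 + ∑' k, ∫⁻ z in S k, ENNReal.ofReal (‖z‖ ^ α) := by
          refine add_le_add ?_ (lintegral_iUnion_le _ _)
          rw [Measure.restrict_singleton, measure_singleton]
          simp
      _ ≤ ∑' k, ENNReal.ofReal ((2:ℝ)⁻¹ ^ α * ρ ^ k) * B := by
          rw [zero_add]; exact ENNReal.tsum_le_tsum hterm
      _ = ENNReal.ofReal ((2:ℝ)⁻¹ ^ α) * (∑' k, ENNReal.ofReal ρ ^ k) * B := by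
          rw [ENNReal.tsum_mul_right]
          congr 1
          rw [← ENNReal.tsum_mul_left]
          congr 1; funext k
          rw [← ENNReal.ofReal_pow hρpos.le, ← ENNReal.ofReal_mul (by positivity)]
      _ < ⊤ := by
          rw [ENNReal.tsum_geometric]
          refine ENNReal.mul_lt_top (ENNReal.mul_lt_top ENNReal.ofReal_lt_top ?_) hBlt
          rw [ENNReal.inv_lt_top]
          exact tsub_pos_of_lt (by simpa using ENNReal.ofReal_lt_one.2 hρlt)

lemma aux_ball_rpow_scale (m : ℕ) (α R : ℝ) (hR : 0 < R) :
    ∫⁻ y in ball (0 : EuclideanSpace ℝ (Fin m)) R, ENNReal.ofReal (‖y‖ ^ α)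
      = ENNReal.ofReal (R ^ (α + (m:ℝ))) *
        ∫⁻ z in ball (0 : EuclideanSpace ℝ (Fin m)) 1, ENNReal.ofReal (‖z‖ ^ α) := by
  have hfr : Module.finrank ℝ (EuclideanSpace ℝ (Fin m)) = m := finrank_euclideanSpace_fin
  have hmeas : Measurable fun y : EuclideanSpace ℝ (Fin m) => ENNReal.ofReal (‖y‖ ^ α) :=
    ENNReal.measurable_ofReal.comp (measurable_norm.pow_const α)
  have hmap := Measure.map_addHaar_smul (volume : Measure (EuclideanSpace ℝ (Fin m))) hR.ne'
  have hpre : (fun z : EuclideanSpace ℝ (Fin m) => R • z) ⁻¹' ball 0 R = ball 0 1 := by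
    ext z
    simp only [Set.mem_preimage, mem_ball_zero_iff, norm_smul, Real.norm_eq_abs,
      abs_of_pos hR]
    constructor
    · intro h; nlinarith [norm_nonneg z]
    · intro h; nlinarith [norm_nonneg z]
  have hRd : (0:ℝ) < R ^ m := pow_pos hR m
  have key : ∫⁻ y in ball (0 : EuclideanSpace ℝ (Fin m)) R, ENNReal.ofReal (‖y‖ ^ α)
        ∂(Measure.map (fun z => R • z) volume)
      = ENNReal.ofReal (R ^ α) *
        ∫⁻ z in ball (0 : EuclideanSpace ℝ (Fin m)) 1, ENNReal.ofReal (‖z‖ ^ α) := by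
    rw [setLIntegral_map measurableSet_ball hmeas (measurable_const_smul R), hpre,
      ← lintegral_const_mul' _ _ ENNReal.ofReal_ne_top]
    refine setLIntegral_congr_fun measurableSet_ball (fun z hz => ?_)
    rw [norm_smul, Real.norm_eq_abs, abs_of_pos hR,
      Real.mul_rpow hR.le (norm_nonneg z), ENNReal.ofReal_mul (Real.rpow_nonneg hR.le α)]
  rw [hmap, hfr] at key
  rw [Measure.restrict_smul, lintegral_smul_measure, smul_eq_mul] at key
  have hinv : abs ((R ^ m)⁻¹) = (R ^ m)⁻¹ := abs_of_pos (by positivity)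
  rw [hinv] at key
  have := congrArg (fun t => ENNReal.ofReal (R ^ m) * t) key
  simp only at this
  rw [← mul_assoc, ← ENNReal.ofReal_mul hRd.le, mul_inv_cancel₀ hRd.ne', ENNReal.ofReal_one,
    one_mul] at this
  rw [this, ← mul_assoc, ← ENNReal.ofReal_mul hRd.le]
  congr 2
  rw [Real.rpow_add hR, ← Real.rpow_natCast R m, mul_comm]

lemma aux_holder (m : ℕ) (p q γ : ℝ) (hp : 1 < p) (hpq : 1 / p + 1 / q = 1)
    (f : EuclideanSpace ℝ (Fin m) → ℝ) (hf : Measurable f)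
    (S : Set (EuclideanSpace ℝ (Fin m))) (hS : MeasurableSet S) (R : ℝ)
    (hSsub : ∀ y ∈ S, 1 < ‖y‖ ∧ ‖y‖ ≤ R) :
    ∫⁻ y in S, ENNReal.ofReal |f y|
      ≤ (∫⁻ y in S, ENNReal.ofReal (|f y| ^ p / (1 + ‖y‖) ^ γ)) ^ (1/p) *
        (ENNReal.ofReal ((2:ℝ) ^ (γ/p*q) + 1) *
          ∫⁻ y in ball (0 : EuclideanSpace ℝ (Fin m)) (2*R),
            ENNReal.ofReal (‖y‖ ^ (γ/p*q))) ^ (1/q) := by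
  have hp0 : (0:ℝ) < p := by linarith
  have hq0 : (0:ℝ) < q := by
    by_contra h
    push_neg at h
    have h1 : 1/q ≤ 0 := div_nonpos_of_nonneg_of_nonpos zero_le_one h
    have h2 : 1/p < 1 := by rw [div_lt_one hp0]; exact hp
    linarith
  have hpq' : p.HolderConjugate q := Real.holderConjugate_iff.mpr ⟨hp, by simpa [one_div] using hpq⟩
  set w : EuclideanSpace ℝ (Fin m) → ℝ := fun y => 1 + ‖y‖ with hw
  have hwpos : ∀ y, 0 < w y := fun y => by have := norm_nonneg y; simp [hw]; linarith
  set F : EuclideanSpace ℝ (Fin m) → ℝ≥0∞ :=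
    fun y => ENNReal.ofReal (|f y| * w y ^ (-(γ/p))) with hF
  set G : EuclideanSpace ℝ (Fin m) → ℝ≥0∞ :=
    fun y => ENNReal.ofReal (w y ^ (γ/p)) with hG
  have hwmeas : Measurable w := measurable_const.add measurable_norm
  have hFmeas : Measurable F :=
    ENNReal.measurable_ofReal.comp ((hf.abs).mul (hwmeas.pow_const _))
  have hGmeas : Measurable G := ENNReal.measurable_ofReal.comp (hwmeas.pow_const _)
  have hFG : ∀ y, ENNReal.ofReal |f y| = (F * G) y := by
    intro y
    simp only [Pi.mul_apply, hF, hG]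
    rw [← ENNReal.ofReal_mul (by positivity), mul_assoc,
      ← Real.rpow_add (hwpos y), neg_add_cancel, Real.rpow_zero, mul_one]
  have h1 : ∫⁻ y in S, ENNReal.ofReal |f y| = ∫⁻ y in S, (F * G) y := by
    simp only [hFG]
  rw [h1]
  refine le_trans (ENNReal.lintegral_mul_le_Lp_mul_Lq _ hpq' hFmeas.aemeasurable
    hGmeas.aemeasurable) ?_
  have hFp : ∀ y, F y ^ p = ENNReal.ofReal (|f y| ^ p / (1 + ‖y‖) ^ γ) := by
    intro y
    rw [hF]
    rw [ENNReal.ofReal_rpow_of_nonneg (by positivity) hp0.le,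
      Real.mul_rpow (abs_nonneg _) (Real.rpow_nonneg (hwpos y).le _),
      ← Real.rpow_mul (hwpos y).le]
    have he : -(γ/p) * p = -γ := by field_simp
    rw [he, Real.rpow_neg (hwpos y).le, ← div_eq_mul_inv]
  have hGq : ∀ y, G y ^ q = ENNReal.ofReal (w y ^ (γ/p*q)) := by
    intro y
    rw [hG, ENNReal.ofReal_rpow_of_nonneg (Real.rpow_nonneg (hwpos y).le _) hq0.le,
      ← Real.rpow_mul (hwpos y).le]
  have hGbound : ∫⁻ y in S, G y ^ q
      ≤ ENNReal.ofReal ((2:ℝ) ^ (γ/p*q) + 1) *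
        ∫⁻ y in ball (0 : EuclideanSpace ℝ (Fin m)) (2*R),
          ENNReal.ofReal (‖y‖ ^ (γ/p*q)) := by
    rcases S.eq_empty_or_nonempty with rfl | hne
    · simp
    obtain ⟨y₀, hy₀⟩ := hne
    have hR1 : 1 < R := lt_of_lt_of_le (hSsub y₀ hy₀).1 (hSsub y₀ hy₀).2
    have hball : S ⊆ ball (0 : EuclideanSpace ℝ (Fin m)) (2*R) := fun y hy =>
      mem_ball_zero_iff.2 (lt_of_le_of_lt (hSsub y hy).2 (by linarith))
    calc ∫⁻ y in S, G y ^ q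
        ≤ ∫⁻ y in S, ENNReal.ofReal ((2:ℝ) ^ (γ/p*q) + 1) *
            ENNReal.ofReal (‖y‖ ^ (γ/p*q)) := by
          refine setLIntegral_mono' hS fun y hy => ?_
          rw [hGq y, ← ENNReal.ofReal_mul (by positivity)]
          exact ENNReal.ofReal_le_ofReal (aux_one_add_rpow _ _ (hSsub y hy).1)
      _ = ENNReal.ofReal ((2:ℝ) ^ (γ/p*q) + 1) *
            ∫⁻ y in S, ENNReal.ofReal (‖y‖ ^ (γ/p*q)) :=
          lintegral_const_mul' _ _ ENNReal.ofReal_ne_top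
      _ ≤ _ := mul_le_mul_right (lintegral_mono_set hball) _
  calc (∫⁻ y in S, F y ^ p) ^ (1/p) * (∫⁻ y in S, G y ^ q) ^ (1/q)
      = (∫⁻ y in S, ENNReal.ofReal (|f y| ^ p / (1 + ‖y‖) ^ γ)) ^ (1/p) *
          (∫⁻ y in S, G y ^ q) ^ (1/q) := by simp only [hFp]
    _ ≤ _ := by
        refine mul_le_mul_right (ENNReal.rpow_le_rpow hGbound (by positivity)) _

lemma norm_extendBdry {n : ℕ} (hn : 0 < n) (y' : EuclideanSpace ℝ (Fin (n - 1))) :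
    ‖(extendBdry y' : EuclideanSpace ℝ (Fin n))‖ = ‖y'‖ := by
  obtain ⟨m, rfl⟩ : ∃ m, n = m + 1 := ⟨n - 1, (Nat.succ_pred_eq_of_pos hn).symm⟩
  have happ : ∀ i : Fin (m+1), (extendBdry y' : EuclideanSpace ℝ (Fin (m+1))) i
      = if h : (i : ℕ) < m then y' ⟨(i : ℕ), h⟩ else 0 := fun i => rfl
  rw [EuclideanSpace.norm_eq, EuclideanSpace.norm_eq]
  congr 1
  rw [Fin.sum_univ_castSucc]
  have hlast : (extendBdry y' : EuclideanSpace ℝ (Fin (m+1))) (Fin.last m) = 0 := by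
    rw [happ]; simp
  rw [hlast]
  simp only [norm_zero, ne_eq, OfNat.ofNat_ne_zero, not_false_eq_true, zero_pow, add_zero]
  refine Finset.sum_congr rfl fun j _ => ?_
  rw [happ]
  have : ((j.castSucc : Fin (m+1)) : ℕ) < m := j.isLt
  rw [dif_pos this]
  rfl

lemma surfaceArea_pos {n : ℕ} (hn : 0 < n) : 0 < surfaceArea n := by
  unfold surfaceArea
  have h1 : (0:ℝ) < Real.pi ^ ((n:ℝ)/2) := Real.rpow_pos_of_pos Real.pi_pos _
  have h2 : (0:ℝ) < Real.Gamma ((n:ℝ)/2) :=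
    Real.Gamma_pos_of_pos (by positivity)
  positivity



set_option maxHeartbeats 1000000 in
/-- Estimate for `v₁(x) = ∫_{1<|y'|≤|x|/2} P(x,y') f(y') dy'`:
`v₁(x) = o(x_n |x|^{γ/p+(n-1)/q-n})` as `|x| → ∞`, `x ∈ H`. -/
theorem stmt11 (n : ℕ) (hn : 3 ≤ n) (p q γ : ℝ) (hp : 1 < p)
    (hpq : 1 / p + 1 / q = 1) (hγ : -((n : ℝ) - 1) * (p - 1) < γ)
    (f : EuclideanSpace ℝ (Fin (n - 1)) → ℝ) (hf : Measurable f)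
    (hfint : ∫⁻ y', ENNReal.ofReal (|f y'| ^ p / (1 + ‖y'‖) ^ γ) < ⊤) :
    (fun x : EuclideanSpace ℝ (Fin n) =>
        ∫ y' in {y' : EuclideanSpace ℝ (Fin (n - 1)) | 1 < ‖y'‖ ∧ ‖y'‖ ≤ ‖x‖ / 2},
          halfSpacePoissonKernel n x y' * f y')
      =o[comap (fun x => ‖x‖) atTop ⊓ 𝓟 (upperHalfSpace n)]
      fun x => lastCoord x * ‖x‖ ^ (γ / p + ((n : ℝ) - 1) / q - n) := by
  classical
  have hp0 : (0:ℝ) < p := by linarith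
  have hq0 : (0:ℝ) < q := by
    by_contra h
    push_neg at h
    have h1 : 1/q ≤ 0 := div_nonpos_of_nonneg_of_nonpos zero_le_one h
    have h2 : 1/p < 1 := by rw [div_lt_one hp0]; exact hp
    linarith
  have hpqe : q + p = p * q := by
    field_simp at hpq
    linarith
  have hd : ((n - 1 : ℕ) : ℝ) = (n:ℝ) - 1 := by
    have h1 : (1:ℕ) ≤ n := by omega
    push_cast [Nat.cast_sub h1]
    ring
  set α : ℝ := γ / p * q with hα
  have hαd : 0 < α + ((n:ℝ) - 1) := by
    have h1 : γ * q > -((n:ℝ) - 1) * (p - 1) * q := by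
      have := mul_lt_mul_of_pos_right hγ hq0
      linarith
    have h2 : -((n:ℝ) - 1) * (p - 1) * q = -((n:ℝ) - 1) * p := by
      have : (p - 1) * q = p := by nlinarith
      nlinarith
    have h3 : γ * q > -((n:ℝ) - 1) * p := by linarith
    have h4 : γ * q / p > -((n:ℝ) - 1) := by
      rw [gt_iff_lt, lt_div_iff₀ hp0]
      nlinarith
    have : α = γ * q / p := by rw [hα]; ring
    rw [this]
    linarith
  set τ : ℝ := γ / p + ((n:ℝ) - 1) / q with hτ
  have hτeq : τ = (α + ((n:ℝ) - 1)) / q := by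
    rw [hτ, hα]
    field_simp
  have hτpos : 0 < τ := by
    rw [hτeq]; exact div_pos hαd hq0
  -- constants
  set C₁ : ℝ≥0∞ := ∫⁻ z in Metric.ball (0 : (EuclideanSpace ℝ (Fin (n - 1)))) 1, ENNReal.ofReal (‖z‖ ^ α) with hC₁def
  have hC₁ : C₁ < ⊤ := by
    refine aux_ball_rpow_lt_top (n-1) (by omega) α ?_
    rw [hd]; linarith
  have hω : 0 < surfaceArea n := surfaceArea_pos (by omega)
  set c3 : ℝ := 2 ^ (n+1) / surfaceArea n with hc3def
  have hc3 : 0 < c3 := by positivity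
  set C2 : ℝ := (2:ℝ) ^ α + 1 with hC2def
  have hC2 : 0 < C2 := by
    have : (0:ℝ) < (2:ℝ) ^ α := Real.rpow_pos_of_pos (by norm_num) α
    linarith
  set D : ℝ≥0∞ := (ENNReal.ofReal C2 * C₁) ^ (1/q) with hDdef
  have hD : D ≠ ⊤ :=
    (ENNReal.rpow_lt_top_of_nonneg (by positivity) (ENNReal.mul_ne_top
      ENNReal.ofReal_ne_top hC₁.ne)).ne
  set Dt : ℝ := D.toReal with hDt
  have hDt0 : 0 ≤ Dt := ENNReal.toReal_nonneg
  -- measurable density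
  set g : (EuclideanSpace ℝ (Fin (n - 1))) → ℝ≥0∞ := fun y => ENNReal.ofReal (|f y| ^ p / (1 + ‖y‖) ^ γ) with hg
  have hgmeas : Measurable g :=
    ENNReal.measurable_ofReal.comp ((hf.abs.pow_const p).div
      ((measurable_const.add measurable_norm).pow_const γ))
  rw [Asymptotics.isLittleO_iff]
  intro ε hε
  set s : ℝ := ε / (2 * c3 * (Dt + 1)) with hs_def
  have hs : 0 < s := by positivity
  -- choose A
  obtain ⟨A, hA1, hIA⟩ : ∃ A : ℝ, 1 ≤ A ∧
      ∫⁻ y in {y : (EuclideanSpace ℝ (Fin (n - 1))) | A < ‖y‖}, g y ≤ ENNReal.ofReal (s ^ p) := by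
    set ν : Measure (EuclideanSpace ℝ (Fin (n - 1))) := volume.withDensity g with hν
    have hmeasS : ∀ c : ℝ, MeasurableSet {y : (EuclideanSpace ℝ (Fin (n - 1))) | c < ‖y‖} := fun c =>
      measurableSet_lt measurable_const measurable_norm
    have hνle : ∀ c : ℝ, ν {y : (EuclideanSpace ℝ (Fin (n - 1))) | c < ‖y‖} ≤ ∫⁻ y, g y := fun c => by
      rw [hν, withDensity_apply _ (hmeasS c)]
      exact setLIntegral_le_lintegral _ _
    have hanti : Antitone fun k : ℕ => {y : (EuclideanSpace ℝ (Fin (n - 1))) | (k:ℝ) < ‖y‖} := by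
      intro k l hkl y hy
      exact lt_of_le_of_lt ((Nat.cast_le (α := ℝ)).mpr hkl) hy
    have hempty : ⋂ k : ℕ, {y : (EuclideanSpace ℝ (Fin (n - 1))) | (k:ℝ) < ‖y‖} = ∅ := by
      ext y
      simp only [Set.mem_iInter, Set.mem_setOf_eq, Set.mem_empty_iff_false, iff_false,
        not_forall, not_lt]
      obtain ⟨k, hk⟩ := exists_nat_gt ‖y‖
      exact ⟨k, hk.le⟩
    have htend := tendsto_measure_iInter_atTop (μ := ν)
      (s := fun k : ℕ => {y : (EuclideanSpace ℝ (Fin (n - 1))) | (k:ℝ) < ‖y‖})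
      (fun k => (hmeasS (k:ℝ)).nullMeasurableSet) hanti
      ⟨0, (lt_of_le_of_lt (hνle _) hfint).ne⟩
    rw [hempty, measure_empty] at htend
    have hpos : (0:ℝ≥0∞) < ENNReal.ofReal (s ^ p) :=
      ENNReal.ofReal_pos.2 (Real.rpow_pos_of_pos hs p)
    obtain ⟨k, hk⟩ := (htend.eventually_lt_const hpos).exists
    refine ⟨max (k:ℝ) 1, le_max_right _ _, ?_⟩
    have hsub : {y : (EuclideanSpace ℝ (Fin (n - 1))) | max (k:ℝ) 1 < ‖y‖} ⊆ {y : (EuclideanSpace ℝ (Fin (n - 1))) | (k:ℝ) < ‖y‖} := fun y hy =>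
      show ((k:ℕ):ℝ) < ‖y‖ from lt_of_le_of_lt (le_max_left _ _) hy
    calc ∫⁻ y in {y : (EuclideanSpace ℝ (Fin (n - 1))) | max (k:ℝ) 1 < ‖y‖}, g y
        = ν {y : (EuclideanSpace ℝ (Fin (n - 1))) | max (k:ℝ) 1 < ‖y‖} := by
          rw [hν, withDensity_apply _ (hmeasS _)]
      _ ≤ ν {y : (EuclideanSpace ℝ (Fin (n - 1))) | (k:ℝ) < ‖y‖} := measure_mono hsub
      _ ≤ ENNReal.ofReal (s ^ p) := hk.le
  -- the constant K'
  set K' : ℝ≥0∞ := (∫⁻ y, g y) ^ (1/p) *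
      (ENNReal.ofReal C2 * (ENNReal.ofReal ((2*A) ^ (α + ((n-1:ℕ):ℝ))) * C₁)) ^ (1/q)
    with hK'def
  have hK'top : K' ≠ ⊤ := by
    refine ENNReal.mul_ne_top
      (ENNReal.rpow_lt_top_of_nonneg (by positivity) hfint.ne).ne
      (ENNReal.rpow_lt_top_of_nonneg (by positivity) (ENNReal.mul_ne_top
        ENNReal.ofReal_ne_top (ENNReal.mul_ne_top ENNReal.ofReal_ne_top hC₁.ne))).ne
  set Kr : ℝ := K'.toReal with hKr
  have hKr0 : 0 ≤ Kr := ENNReal.toReal_nonneg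
  set R1 : ℝ := (2 * c3 * (Kr + 1) / ε) ^ (1/τ) with hR1def
  have hR1base : 0 < 2 * c3 * (Kr + 1) / ε := by positivity
  have hR1nonneg : 0 ≤ R1 := Real.rpow_nonneg hR1base.le _
  set R0 : ℝ := max (max (2*A) 2) R1 with hR0def
  -- the eventual estimate
  have hev1 : ∀ᶠ x : EuclideanSpace ℝ (Fin n) in comap (fun x => ‖x‖) atTop, R0 ≤ ‖x‖ := by
    refine eventually_comap.2 ?_
    filter_upwards [eventually_ge_atTop R0] with b hb x hx
    rw [hx]; exact hb
  have hev2 : ∀ᶠ x : EuclideanSpace ℝ (Fin n) in 𝓟 (upperHalfSpace n),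
      x ∈ upperHalfSpace n := eventually_principal.2 fun _ hx => hx
  filter_upwards [hev1.filter_mono inf_le_left, hev2.filter_mono inf_le_right]
    with x hxR hxH
  have hxn : 0 < lastCoord x := hxH
  have hx2 : 2 ≤ ‖x‖ := le_trans (le_trans (le_max_right _ _) (le_max_left _ _)) hxR
  have hxA : 2*A ≤ ‖x‖ := le_trans (le_trans (le_max_left _ _) (le_max_left _ _)) hxR
  have hxR1 : R1 ≤ ‖x‖ := le_trans (le_max_right _ _) hxR
  have hxpos : 0 < ‖x‖ := by linarith
  set R : ℝ := ‖x‖ / 2 with hRdef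
  have hRA : A ≤ R := by rw [hRdef]; linarith
  have hR1' : 1 ≤ R := by rw [hRdef]; linarith [hA1]
  set Sx : Set (EuclideanSpace ℝ (Fin (n - 1))) := {y' : (EuclideanSpace ℝ (Fin (n - 1))) | 1 < ‖y'‖ ∧ ‖y'‖ ≤ R} with hSxdef
  have hSxmeas : MeasurableSet Sx := by
    rw [hSxdef, Set.setOf_and]
    exact (measurableSet_lt measurable_const measurable_norm).inter
      (measurableSet_le measurable_norm measurable_const)
  -- kernel bound
  have hker : ∀ y ∈ Sx, ENNReal.ofReal ‖halfSpacePoissonKernel n x y * f y‖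
      ≤ ENNReal.ofReal (c3 * lastCoord x * ‖x‖ ^ (-(n:ℝ))) * ENNReal.ofReal |f y| := by
    intro y hy
    have hnorme : ‖extendBdry y‖ = ‖y‖ := norm_extendBdry (by omega) y
    have hdist : R ≤ ‖x - extendBdry y‖ := by
      have h1 := norm_sub_norm_le x (extendBdry y)
      have h2 : ‖y‖ ≤ R := hy.2
      rw [hnorme] at h1
      rw [hRdef] at h2 ⊢
      linarith
    have hRpos : (0:ℝ) < R := by linarith
    have hPnonneg : 0 ≤ halfSpacePoissonKernel n x y := by
      unfold halfSpacePoissonKernel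
      have := norm_nonneg (x - extendBdry y)
      positivity
    have hPle : halfSpacePoissonKernel n x y ≤ c3 * lastCoord x * ‖x‖ ^ (-(n:ℝ)) := by
      have hd1 : 0 < surfaceArea n * R ^ n := by positivity
      have hd2 : surfaceArea n * R ^ n ≤ surfaceArea n * ‖x - extendBdry y‖ ^ n := by
        gcongr
        all_goals first | exact hRpos.le | exact hdist
      have h3 : halfSpacePoissonKernel n x y ≤ 2 * lastCoord x / (surfaceArea n * R ^ n) := by
        unfold halfSpacePoissonKernel
        exact (div_le_div_iff_of_pos_left (by linarith) (lt_of_lt_of_le hd1 hd2) hd1).2 hd2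
      refine le_trans h3 (le_of_eq ?_)
      rw [Real.rpow_neg hxpos.le, Real.rpow_natCast, hRdef, div_pow, hc3def]
      rw [div_eq_iff (by positivity), pow_succ]
      field_simp
      try ring
    rw [norm_mul, Real.norm_eq_abs, Real.norm_eq_abs, abs_of_nonneg hPnonneg,
      ENNReal.ofReal_mul hPnonneg]
    exact mul_le_mul_left (ENNReal.ofReal_le_ofReal hPle) _
  -- splitting
  set Snear : Set (EuclideanSpace ℝ (Fin (n - 1))) := {y : (EuclideanSpace ℝ (Fin (n - 1))) | 1 < ‖y‖ ∧ ‖y‖ ≤ A} with hSneardef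
  set Sfar : Set (EuclideanSpace ℝ (Fin (n - 1))) := Sx ∩ {y : (EuclideanSpace ℝ (Fin (n - 1))) | A < ‖y‖} with hSfardef
  have hSnearmeas : MeasurableSet Snear := by
    rw [hSneardef, Set.setOf_and]
    exact (measurableSet_lt measurable_const measurable_norm).inter
      (measurableSet_le measurable_norm measurable_const)
  have hSfarmeas : MeasurableSet Sfar :=
    hSxmeas.inter (measurableSet_lt measurable_const measurable_norm)
  have hsplit : Sx ⊆ Snear ∪ Sfar := by
    intro y hy
    rcases le_or_gt ‖y‖ A with h | h
    · exact Or.inl ⟨hy.1, h⟩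
    · exact Or.inr ⟨hy, h⟩
  -- near bound
  have hnear : ∫⁻ y in Snear, ENNReal.ofReal |f y| ≤ K' := by
    refine le_trans (aux_holder (n-1) p q γ hp hpq f hf Snear hSnearmeas A
      (fun y hy => hy)) ?_
    rw [hK'def]
    rw [aux_ball_rpow_scale (n-1) (γ/p*q) (2*A) (by linarith)]
    refine mul_le_mul' (ENNReal.rpow_le_rpow (setLIntegral_le_lintegral _ _)
      (by positivity)) (le_of_eq rfl)
  -- far bound
  have hfar : ∫⁻ y in Sfar, ENNReal.ofReal |f y|
      ≤ (ENNReal.ofReal (s ^ p)) ^ (1/p) *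
        (ENNReal.ofReal C2 * (ENNReal.ofReal ((2*R) ^ (α + ((n-1:ℕ):ℝ))) * C₁)) ^ (1/q) := by
    refine le_trans (aux_holder (n-1) p q γ hp hpq f hf Sfar hSfarmeas R
      (fun y hy => hy.1)) ?_
    rw [aux_ball_rpow_scale (n-1) (γ/p*q) (2*R) (by linarith)]
    refine mul_le_mul' (ENNReal.rpow_le_rpow ?_ (by positivity)) (le_of_eq rfl)
    refine le_trans (lintegral_mono_set (fun y (hy : y ∈ Sfar) => hy.2)) hIA
  -- put together
  have hJ : ∫⁻ y in Sx, ENNReal.ofReal |f y|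
      ≤ K' + (ENNReal.ofReal (s ^ p)) ^ (1/p) *
        (ENNReal.ofReal C2 * (ENNReal.ofReal ((2*R) ^ (α + ((n-1:ℕ):ℝ))) * C₁)) ^ (1/q) :=
    le_trans (lintegral_mono_set hsplit)
      (le_trans (lintegral_union_le _ _ _) (add_le_add hnear hfar))
  -- simplify the far constant
  have h2R : 2 * R = ‖x‖ := by rw [hRdef]; ring
  have hfarconst : (ENNReal.ofReal (s ^ p)) ^ (1/p) *
      (ENNReal.ofReal C2 * (ENNReal.ofReal ((2*R) ^ (α + ((n-1:ℕ):ℝ))) * C₁)) ^ (1/q)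
      = ENNReal.ofReal (s * (Dt * ‖x‖ ^ τ)) := by
    have e1 : (ENNReal.ofReal (s ^ p)) ^ (1/p) = ENNReal.ofReal s := by
      rw [ENNReal.ofReal_rpow_of_nonneg (Real.rpow_nonneg hs.le _) (by positivity),
        ← Real.rpow_mul hs.le, mul_one_div_cancel hp0.ne', Real.rpow_one]
    have e2 : ENNReal.ofReal C2 * (ENNReal.ofReal ((2*R) ^ (α + ((n-1:ℕ):ℝ))) * C₁)
        = (ENNReal.ofReal C2 * C₁) * ENNReal.ofReal (‖x‖ ^ (α + ((n-1:ℕ):ℝ))) := by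
      rw [h2R]; ring
    have e3 : ((ENNReal.ofReal C2 * C₁) * ENNReal.ofReal (‖x‖ ^ (α + ((n-1:ℕ):ℝ)))) ^ (1/q)
        = D * ENNReal.ofReal (‖x‖ ^ τ) := by
      rw [ENNReal.mul_rpow_of_nonneg _ _ (by positivity), hDdef,
        ENNReal.ofReal_rpow_of_nonneg (Real.rpow_nonneg hxpos.le _) (by positivity),
        ← Real.rpow_mul hxpos.le]
      congr 2
      rw [hd, hτeq]
      field_simp
    rw [e1, e2, e3, ← ENNReal.ofReal_toReal hD, ← hDt,
      ← ENNReal.ofReal_mul hDt0, ← ENNReal.ofReal_mul hs.le]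
  -- main chain
  have hchain : ‖∫ y' in Sx, halfSpacePoissonKernel n x y' * f y'‖
      ≤ (ENNReal.ofReal (c3 * lastCoord x * ‖x‖ ^ (-(n:ℝ))) *
          ENNReal.ofReal (Kr + s * (Dt * ‖x‖ ^ τ))).toReal := by
    refine le_trans (norm_integral_le_lintegral_norm _) ?_
    refine ENNReal.toReal_mono (ENNReal.mul_ne_top ENNReal.ofReal_ne_top
      ENNReal.ofReal_ne_top) ?_
    calc ∫⁻ y in Sx, ENNReal.ofReal ‖halfSpacePoissonKernel n x y * f y‖
        ≤ ∫⁻ y in Sx, ENNReal.ofReal (c3 * lastCoord x * ‖x‖ ^ (-(n:ℝ))) *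
            ENNReal.ofReal |f y| := setLIntegral_mono' hSxmeas hker
      _ = ENNReal.ofReal (c3 * lastCoord x * ‖x‖ ^ (-(n:ℝ))) *
            ∫⁻ y in Sx, ENNReal.ofReal |f y| :=
          lintegral_const_mul' _ _ ENNReal.ofReal_ne_top
      _ ≤ ENNReal.ofReal (c3 * lastCoord x * ‖x‖ ^ (-(n:ℝ))) *
            ENNReal.ofReal (Kr + s * (Dt * ‖x‖ ^ τ)) := by
          refine mul_le_mul_right ?_ _
          refine le_trans hJ ?_
          rw [hfarconst, ENNReal.ofReal_add hKr0 (by positivity), hKr,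
            ENNReal.ofReal_toReal hK'top]
  rw [← ENNReal.ofReal_mul (by positivity)] at hchain
  rw [ENNReal.toReal_ofReal (by positivity)] at hchain
  refine le_trans hchain ?_
  -- final real inequality
  have hnormRHS : ‖lastCoord x * ‖x‖ ^ (τ - (n:ℝ))‖ = lastCoord x * ‖x‖ ^ (τ - (n:ℝ)) := by
    rw [Real.norm_eq_abs, abs_of_nonneg (mul_nonneg hxn.le (Real.rpow_nonneg hxpos.le _))]
  rw [hnormRHS]
  set u : ℝ := ‖x‖ ^ (-τ) with hu
  set v : ℝ := ‖x‖ ^ (τ - (n:ℝ)) with hv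
  set W : ℝ := ‖x‖ ^ τ with hW
  have hu0 : 0 ≤ u := Real.rpow_nonneg hxpos.le _
  have hv0 : 0 ≤ v := Real.rpow_nonneg hxpos.le _
  have e1 : ‖x‖ ^ (-(n:ℝ)) = v * u := by
    rw [hv, hu, ← Real.rpow_add hxpos]
    congr 1
    ring
  have e2 : u * W = 1 := by
    rw [hu, hW, ← Real.rpow_add hxpos, neg_add_cancel, Real.rpow_zero]
  have h5 : c3 * u * Kr ≤ ε / 2 := by
    have hWge : 2 * c3 * (Kr + 1) / ε ≤ W := by
      rw [hW]
      calc 2 * c3 * (Kr + 1) / ε = (R1) ^ τ := by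
            rw [hR1def, ← Real.rpow_mul hR1base.le, one_div_mul_cancel hτpos.ne',
              Real.rpow_one]
        _ ≤ ‖x‖ ^ τ := Real.rpow_le_rpow hR1nonneg hxR1 hτpos.le
    have hWpos : 0 < W := lt_of_lt_of_le hR1base hWge
    have hule : u ≤ ε / (2 * c3 * (Kr + 1)) := by
      have h1 : u = W⁻¹ := by
        rw [hu, hW, Real.rpow_neg hxpos.le]
      have h2 : W⁻¹ ≤ (2 * c3 * (Kr + 1) / ε)⁻¹ :=
        inv_anti₀ hR1base hWge
      rw [h1, inv_div] at *
      exact le_trans h2 (le_of_eq rfl)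
    have hstep1 : c3 * u * Kr ≤ (c3 * u) * (Kr + 1) :=
      mul_le_mul_of_nonneg_left (by linarith) (by positivity)
    have hstep2 : (c3 * u) * (Kr + 1) ≤ (c3 * (ε / (2 * c3 * (Kr + 1)))) * (Kr + 1) :=
      mul_le_mul_of_nonneg_right (mul_le_mul_of_nonneg_left hule hc3.le) (by linarith)
    have hstep3 : (c3 * (ε / (2 * c3 * (Kr + 1)))) * (Kr + 1) = ε / 2 := by
      field_simp
    linarith
  have h6 : c3 * (s * Dt) ≤ ε / 2 := by
    have h61 : c3 * (s * Dt) ≤ c3 * (s * (Dt + 1)) :=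
      mul_le_mul_of_nonneg_left (mul_le_mul_of_nonneg_left (by linarith) hs.le) hc3.le
    have h62 : c3 * (s * (Dt + 1)) = ε / 2 := by
      rw [hs_def]
      field_simp
    linarith
  have hfactor : c3 * u * Kr + c3 * (s * Dt) ≤ ε := by linarith
  rw [e1]
  have hre : c3 * lastCoord x * (v * u) * (Kr + s * (Dt * W))
      = lastCoord x * v * (c3 * u * Kr + c3 * (s * Dt) * (u * W)) := by ring
  rw [hre, e2, mul_one]
  calc lastCoord x * v * (c3 * u * Kr + c3 * (s * Dt))
      ≤ lastCoord x * v * ε :=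
        mul_le_mul_of_nonneg_left hfactor (mul_nonneg hxn.le hv0)
    _ = ε * (lastCoord x * v) := by ring
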